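/- The lattice Λ of the refined fan sequence is generated by the classes d(k₁,k₂): with notation as in the paper, let 𝕆 = Σ_{k ∈ N ∩ |Σ|} ℤ·(Ψ(k), k) ⊆ ℚ^m ⊕ N and Λ = {(λ,0) ∈ 𝕆} ⊆ ℚ^m. Then for all k₁, k₂ ∈ N ∩ |Σ|, the element d(k₁,k₂) := Ψ(k₁) + Ψ(k₂) − Ψ(k₁+k₂) lies in Λ, and Λ = Σ_{k₁,k₂ ∈ N ∩ |Σ|} ℤ·d(k₁,k₂). -/

import Mathlib

open scoped BigOperators

/-- Combinatorial data of a (stacky) fan: a finitely generated abelian group `N` with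
its realification map `bar : N → N_ℝ = V`, ray generators `b₁,…,b_m ∈ N`, and a finite
collection of cones, each identified (as in the paper) with the subset of
`{1,…,m}` indexing its rays. -/
structure FanData (N V : Type*) [AddCommGroup N] [AddCommGroup V] [Module ℝ V]
    (m : ℕ) where
  bar : N →+ V
  b : Fin m → N
  cones : Finset (Finset (Fin m))

namespace FanData

variable {N V : Type*} [AddCommGroup N] [AddCommGroup V] [Module ℝ V] {m : ℕ}
variable (F : FanData N V m)

/-- The cone of `V` spanned by the rays indexed by `σ`. -/
def coneSet (σ : Finset (Fin m)) : Set V :=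
  {x | ∃ c : Fin m → ℝ, (∀ i, 0 ≤ c i) ∧ (∀ i, i ∉ σ → c i = 0) ∧
      x = ∑ i, c i • F.bar (F.b i)}

/-- The support `|Σ|` of the fan. -/
def support : Set V := ⋃ σ ∈ F.cones, F.coneSet σ

/-- The set `N ∩ |Σ|` of lattice points of the support. -/
def latticePts : Set N := {k | F.bar k ∈ F.support}

/-- Simpliciality: the rays of each cone are linearly independent. -/
def Simplicial : Prop :=
  ∀ σ ∈ F.cones, LinearIndependent ℝ (fun i : σ => F.bar (F.b (i : Fin m)))

/-- The collection of cones is closed under passing to faces. -/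
def FacesClosed : Prop := ∀ σ ∈ F.cones, ∀ τ, τ ⊆ σ → τ ∈ F.cones

/-- Two cones of the fan meet along a common face. -/
def MeetsInFaces : Prop :=
  ∀ σ ∈ F.cones, ∀ τ ∈ F.cones, ∀ x ∈ F.coneSet σ, x ∈ F.coneSet τ →
    x ∈ F.coneSet (σ ∩ τ)

/-- `Ψ : N ∩ |Σ| → (ℚ_{≥0})^m` records the (unique, by simpliciality) nonnegative
barycentric coordinates of `k̄` on the rays of its minimal cone: `Ψ(k) ≥ 0`,
`k̄ = Σᵢ Ψᵢ(k) b̄ᵢ`, and the support of `Ψ(k)` is contained in every cone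
containing `k̄` (Notation 2.2 of the paper). -/
def IsPsi (Ψ : N → Fin m → ℚ) : Prop :=
  ∀ k ∈ F.latticePts,
    (∀ i, 0 ≤ Ψ k i) ∧
    (F.bar k = ∑ i, (Ψ k i : ℝ) • F.bar (F.b i)) ∧
    (∀ σ ∈ F.cones, F.bar k ∈ F.coneSet σ → ∀ i, Ψ k i ≠ 0 → i ∈ σ)

/-- The subgroup `𝕆 = Σ_{k ∈ N ∩ |Σ|} ℤ·(Ψ(k), k) ⊆ ℚ^m ⊕ N`. -/
def OO (Ψ : N → Fin m → ℚ) : AddSubgroup ((Fin m → ℚ) × N) :=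
  AddSubgroup.closure {p | ∃ k ∈ F.latticePts, p = (Ψ k, k)}

/-- The lattice `Λ = {(λ, 0) ∈ 𝕆} ⊆ ℚ^m` of the refined fan sequence. -/
def Lam (Ψ : N → Fin m → ℚ) : AddSubgroup (Fin m → ℚ) :=
  (F.OO Ψ).comap (AddMonoidHom.inl (Fin m → ℚ) N)

end FanData

/-- The lattice `Λ` of the refined fan sequence is generated by the classes
`d(k₁,k₂) = Ψ(k₁) + Ψ(k₂) − Ψ(k₁+k₂)`: each `d(k₁,k₂)` lies in `Λ`, and
`Λ = Σ_{k₁,k₂ ∈ N ∩ |Σ|} ℤ·d(k₁,k₂)`. -/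
theorem FanData.lam_generated_by_d
    {N V : Type*} [AddCommGroup N] [AddCommGroup V] [Module ℝ V] {m : ℕ}
    (F : FanData N V m) (hsimp : F.Simplicial) (hfaces : F.FacesClosed)
    (hmeet : F.MeetsInFaces)
    (hadd : ∀ k ∈ F.latticePts, ∀ l ∈ F.latticePts, k + l ∈ F.latticePts)
    (Ψ : N → Fin m → ℚ) (hΨ : F.IsPsi Ψ) :
    (∀ k₁ ∈ F.latticePts, ∀ k₂ ∈ F.latticePts,
        Ψ k₁ + Ψ k₂ - Ψ (k₁ + k₂) ∈ F.Lam Ψ) ∧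
    F.Lam Ψ = AddSubgroup.closure
      {x : Fin m → ℚ | ∃ k₁ ∈ F.latticePts, ∃ k₂ ∈ F.latticePts,
        x = Ψ k₁ + Ψ k₂ - Ψ (k₁ + k₂)} := by
  classical
  set S : Set ((Fin m → ℚ) × N) := {p | ∃ k ∈ F.latticePts, p = (Ψ k, k)} with hS
  set Dset : Set (Fin m → ℚ) :=
    {x | ∃ k₁ ∈ F.latticePts, ∃ k₂ ∈ F.latticePts, x = Ψ k₁ + Ψ k₂ - Ψ (k₁ + k₂)} with hDset
  have hd : ∀ k₁ ∈ F.latticePts, ∀ k₂ ∈ F.latticePts,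
      Ψ k₁ + Ψ k₂ - Ψ (k₁ + k₂) ∈ F.Lam Ψ := by
    intro k₁ h₁ k₂ h₂
    have e : ((Ψ k₁ + Ψ k₂ - Ψ (k₁ + k₂), (0:N)) : (Fin m → ℚ) × N)
        = (Ψ k₁, k₁) + (Ψ k₂, k₂) - (Ψ (k₁ + k₂), k₁ + k₂) := by
      refine Prod.ext rfl ?_
      simp
    have hmem : ((Ψ k₁ + Ψ k₂ - Ψ (k₁ + k₂), (0:N)) : (Fin m → ℚ) × N) ∈ F.OO Ψ := by
      rw [e]
      exact sub_mem (add_mem (AddSubgroup.subset_closure ⟨k₁, h₁, rfl⟩)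
        (AddSubgroup.subset_closure ⟨k₂, h₂, rfl⟩))
        (AddSubgroup.subset_closure ⟨k₁ + k₂, hadd _ h₁ _ h₂, rfl⟩)
    simpa [FanData.Lam, AddSubgroup.mem_comap] using hmem
  refine ⟨hd, le_antisymm ?_ ?_⟩
  · -- Λ ≤ closure Dset
    intro x hx
    have hx' : ((x, (0:N)) : (Fin m → ℚ) × N) ∈ AddSubgroup.closure S := by
      simpa [FanData.Lam, FanData.OO, AddSubgroup.mem_comap] using hx
    -- Every element of the monoid closure is 0 or has good form
    have key : ∀ a : (Fin m → ℚ) × N, a ∈ AddSubmonoid.closure S →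
        a = 0 ∨ (a.2 ∈ F.latticePts ∧ a.1 - Ψ a.2 ∈ AddSubgroup.closure Dset) := by
      intro a ha
      induction ha using AddSubmonoid.closure_induction with
      | mem p hp =>
        obtain ⟨k, hk, rfl⟩ := hp
        exact Or.inr ⟨hk, by simpa using zero_mem (AddSubgroup.closure Dset)⟩
      | zero => exact Or.inl rfl
      | add p q hp hq ihp ihq =>
        rcases ihp with rfl | ⟨hp2, hp1⟩
        · simpa using ihq
        rcases ihq with rfl | ⟨hq2, hq1⟩
        · simpa using Or.inr ⟨hp2, hp1⟩
        refine Or.inr ⟨hadd _ hp2 _ hq2, ?_⟩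
        have e : (p + q).1 - Ψ (p + q).2
            = (p.1 - Ψ p.2) + (q.1 - Ψ q.2) + (Ψ p.2 + Ψ q.2 - Ψ (p.2 + q.2)) := by
          show p.1 + q.1 - Ψ (p.2 + q.2) = _
          abel
        rw [e]
        exact add_mem (add_mem hp1 hq1)
          (AddSubgroup.subset_closure ⟨p.2, hp2, q.2, hq2, rfl⟩)
    -- decompose as difference of monoid-closure elements
    have hdiff : ∀ a : (Fin m → ℚ) × N, a ∈ AddSubgroup.closure S →
        ∃ u ∈ AddSubmonoid.closure S, ∃ v ∈ AddSubmonoid.closure S, a = u - v := by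
      intro a ha
      induction ha using AddSubgroup.closure_induction with
      | mem p hp => exact ⟨p, AddSubmonoid.subset_closure hp, 0, zero_mem _, by simp⟩
      | zero => exact ⟨0, zero_mem _, 0, zero_mem _, by simp⟩
      | add p q hp hq ihp ihq =>
        obtain ⟨u, hu, v, hv, rfl⟩ := ihp
        obtain ⟨u', hu', v', hv', rfl⟩ := ihq
        exact ⟨u + u', add_mem hu hu', v + v', add_mem hv hv', by abel⟩
      | neg p hp ihp =>
        obtain ⟨u, hu, v, hv, rfl⟩ := ihp
        exact ⟨v, hv, u, hu, by abel⟩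
    obtain ⟨u, hu, v, hv, heq⟩ := hdiff _ hx'
    have h1 : x = u.1 - v.1 := congrArg Prod.fst heq
    have h2 : (0:N) = u.2 - v.2 := congrArg Prod.snd heq
    have h2' : u.2 = v.2 := by
      have := h2.symm
      linear_combination (norm := abel) this
    have hPsi0 : ∀ h0 : (0:N) ∈ F.latticePts, Ψ 0 ∈ AddSubgroup.closure Dset := by
      intro h0
      refine AddSubgroup.subset_closure ⟨0, h0, 0, h0, ?_⟩
      rw [add_zero]; abel
    rcases key u hu with rfl | ⟨hu2, hu1⟩
    · rcases key v hv with rfl | ⟨hv2, hv1⟩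
      · simp only [Prod.fst_zero, sub_zero, zero_sub] at h1
        simp only [h1]
        simpa using zero_mem (AddSubgroup.closure Dset)
      · -- u = 0, so v.2 = 0, x = -v.1
        have hv20 : v.2 = (0:N) := by rw [← h2']; rfl
        rw [hv20] at hv1 hv2
        have : x = -(v.1 - Ψ 0) - Ψ 0 := by rw [h1]; show 0 - v.1 = _; abel
        rw [this]
        exact sub_mem (neg_mem hv1) (hPsi0 hv2)
    · rcases key v hv with rfl | ⟨hv2, hv1⟩
      · have hu20 : u.2 = (0:N) := by rw [h2']; rfl
        rw [hu20] at hu1 hu2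
        have : x = (u.1 - Ψ 0) + Ψ 0 := by rw [h1]; show u.1 - 0 = _; abel
        rw [this]
        exact add_mem hu1 (hPsi0 hu2)
      · have : x = (u.1 - Ψ u.2) - (v.1 - Ψ v.2) := by
          rw [h1, h2']; abel
        rw [this]
        exact sub_mem hu1 hv1
  · -- closure Dset ≤ Λ
    rw [AddSubgroup.closure_le]
    rintro x ⟨k₁, h₁, k₂, h₂, rfl⟩
    exact hd _ h₁ _ h₂
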